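/- Let u₀ : ℝ → ℝ be an even, 2π-periodic continuous function with u₀(x) > 0 for 0 < |x| ≤ π, such that α₀ := sup_{0<|x|≤π} |x/(2u₀(x))| is finite and F₀(x) := (𝓛u₀(x) − u₀(x)²)/(2|x|·u₀(x)) is essentially bounded on [−π, π]; set δ₀ := ‖F₀‖_{L^∞}. Let T₀ be the linear operator defined by T₀v(x) := (1/(2|x|·u₀(x)))·∫₀^π (K(x−y) + K(x+y) − 2K(y))·y·v(y) dy, and assume T₀ is a bounded linear operator on L^∞ of the circle with operator norm ‖T₀‖ ≤ c for some constant c < 1; set β := 1/(1−c). If δ₀ ≤ 1/(4α₀β²), then: (i) I − T₀ is invertible on L^∞ with ‖(I−T₀)^{−1}‖ ≤ β; (ii) for every ε₀ with (1 − √(1 − 4α₀β²δ₀))/(2α₀β) ≤ ε₀ ≤ 1/(2α₀β), the map G₀(v) := (I−T₀)^{−1}(F₀ − (|x|/(2u₀))·v²) maps the set X_{ε₀} := {v ∈ L^∞ : v even, ‖v‖_{L^∞} ≤ ε₀} into itself and satisfies ‖G₀(v) − G₀(w)‖_{L^∞} ≤ 2α₀βε₀·‖v − w‖_{L^∞} for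 all v, w ∈ X_{ε₀}; (iii) consequently, if moreover ε₀ < 1/(2α₀β), there is a unique v₀ ∈ X_{ε₀} with (I − T₀)v₀ = F₀ − (|x|/(2u₀))·v₀². -/

import Mathlib

open Real MeasureTheory

noncomputable def whithamKernel (x : ℝ) : ℝ :=
  1 / Real.sqrt (2 * Real.pi * |x|)
    + (1 / Real.pi) *
      ∑' m : ℕ, (-1 : ℝ) ^ m * (riemannZeta ((1 : ℂ) / 2 - 2 * (m : ℂ))).re * x ^ (2 * m)
          / (2 * m).factorial
    + (1 / Real.pi) *
      ∑' n : ℕ, ((1 - Real.sqrt (Real.tanh ((n : ℝ) + 1))) / Real.sqrt ((n : ℝ) + 1))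
          * Real.cos (((n : ℝ) + 1) * x)

/-- The operator `𝓛 u(x) = (1/2)∫_{-π}^{π} (K(x-y)+K(x+y)-2K(y)) u(y) dy`. -/
noncomputable def Lcal (u : ℝ → ℝ) (x : ℝ) : ℝ :=
  (1 / 2) * ∫ y in (-Real.pi)..Real.pi,
    (whithamKernel (x - y) + whithamKernel (x + y) - 2 * whithamKernel y) * u y

/-- Lebesgue measure on a fundamental period `(−π, π]` of the circle. -/
noncomputable def circMeasure : Measure ℝ := volume.restrict (Set.Ioc (-Real.pi) Real.pi)

/-- The pointwise formula defining the linear operator `T₀`. -/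
noncomputable def T0fun (u₀ v : ℝ → ℝ) (x : ℝ) : ℝ :=
  (1 / (2 * |x| * u₀ x)) * ∫ y in (0 : ℝ)..Real.pi,
    (whithamKernel (x - y) + whithamKernel (x + y) - 2 * whithamKernel y) * y * v y

/-- The defect `F₀ = (𝓛u₀ − u₀²)/(2|x|u₀)`. -/
noncomputable def F0fun (u₀ : ℝ → ℝ) (x : ℝ) : ℝ :=
  (Lcal u₀ x - u₀ x ^ 2) / (2 * |x| * u₀ x)

/-- The closed ball of radius `ε` of even functions in `L^∞` of the circle. -/
noncomputable def Xball (ε : ℝ) : Set (Lp ℝ ⊤ circMeasure) :=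
  {v | ‖v‖ ≤ ε ∧ ∀ᵐ x ∂circMeasure, v (-x) = v x}

lemma whithamKernel_even (x : ℝ) : whithamKernel (-x) = whithamKernel x := by
  unfold whithamKernel
  have h1 : ∀ m : ℕ, (-x) ^ (2 * m) = x ^ (2 * m) := fun m => by
    rw [pow_mul, pow_mul, neg_sq]
  simp only [abs_neg, mul_neg, Real.cos_neg, h1]

lemma Lcal_even (u : ℝ → ℝ) (x : ℝ) : Lcal u (-x) = Lcal u x := by
  unfold Lcal
  congr 1
  apply intervalIntegral.integral_congr
  intro y _
  have h1 : whithamKernel (-x - y) = whithamKernel (x + y) := by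
    rw [show -x - y = -(x + y) by ring, whithamKernel_even]
  have h2 : whithamKernel (-x + y) = whithamKernel (x - y) := by
    rw [show -x + y = -(x - y) by ring, whithamKernel_even]
  simp only [h1, h2]; ring

lemma F0fun_even (u₀ : ℝ → ℝ) (hu : ∀ x, u₀ (-x) = u₀ x) (x : ℝ) :
    F0fun u₀ (-x) = F0fun u₀ x := by
  unfold F0fun
  rw [Lcal_even, hu, abs_neg]

lemma T0fun_even (u₀ v : ℝ → ℝ) (hu : ∀ x, u₀ (-x) = u₀ x) (x : ℝ) :
    T0fun u₀ v (-x) = T0fun u₀ v x := by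
  unfold T0fun
  rw [hu, abs_neg]
  congr 1
  apply intervalIntegral.integral_congr
  intro y _
  have h1 : whithamKernel (-x - y) = whithamKernel (x + y) := by
    rw [show -x - y = -(x + y) by ring, whithamKernel_even]
  have h2 : whithamKernel (-x + y) = whithamKernel (x - y) := by
    rw [show -x + y = -(x - y) by ring, whithamKernel_even]
  simp only [h1, h2]; ring

lemma circ_ae_neg {p : ℝ → Prop} (h : ∀ᵐ x ∂circMeasure, p x) :
    ∀ᵐ x ∂circMeasure, p (-x) := by
  rw [circMeasure, ae_iff, Measure.restrict_apply' measurableSet_Ioc] at h ⊢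
  have key : {a : ℝ | ¬ p (-a)} ∩ Set.Ioc (-Real.pi) Real.pi
      ⊆ Neg.neg ⁻¹' (({a : ℝ | ¬ p a} ∩ Set.Ioc (-Real.pi) Real.pi) ∪ {-Real.pi}) := by
    rintro x ⟨hx1, hx2, hx3⟩
    simp only [Set.mem_preimage, Set.mem_union, Set.mem_inter_iff, Set.mem_setOf_eq,
      Set.mem_Ioc, Set.mem_singleton_iff]
    by_cases hx : -x = -Real.pi
    · exact Or.inr hx
    · exact Or.inl ⟨hx1, lt_of_le_of_ne (by linarith) (Ne.symm hx), by linarith⟩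
  refine measure_mono_null key ?_
  rw [Measure.measure_preimage_neg]
  exact measure_union_null h (measure_singleton _)

lemma linf_norm_le {μ : Measure ℝ} (f : Lp ℝ ⊤ μ) {C : ℝ} (hC : 0 ≤ C)
    (h : ∀ᵐ x ∂μ, ‖(f : ℝ → ℝ) x‖ ≤ C) : ‖f‖ ≤ C := by
  rw [Lp.norm_def, eLpNorm_exponent_top]
  exact ENNReal.toReal_le_of_le_ofReal hC (eLpNormEssSup_le_of_ae_bound h)

lemma linf_ae_le {μ : Measure ℝ} (f : Lp ℝ ⊤ μ) :
    ∀ᵐ x ∂μ, ‖(f : ℝ → ℝ) x‖ ≤ ‖f‖ := by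
  have h2 : eLpNormEssSup (f : ℝ → ℝ) μ < ⊤ := by
    have := Lp.eLpNorm_lt_top f; rwa [eLpNorm_exponent_top] at this
  filter_upwards [ae_le_eLpNormEssSup (f := (f : ℝ → ℝ)) (μ := μ)] with x hx
  rw [Lp.norm_def, eLpNorm_exponent_top]
  calc ‖(f : ℝ → ℝ) x‖ = ((‖(f : ℝ → ℝ) x‖₊ : ENNReal)).toReal := by simp
    _ ≤ (eLpNormEssSup (f : ℝ → ℝ) μ).toReal := ENNReal.toReal_mono h2.ne hx

lemma linf_ae_abs_sub_le {μ : Measure ℝ} (a b : Lp ℝ ⊤ μ) :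
    ∀ᵐ x ∂μ, |(a : ℝ → ℝ) x - (b : ℝ → ℝ) x| ≤ ‖a - b‖ := by
  filter_upwards [Lp.coeFn_sub a b, linf_ae_le (a - b)] with x h1 h2
  rw [h1, Pi.sub_apply, Real.norm_eq_abs] at h2
  exact h2

lemma whitham_quadratic_aux (α₀ β δ₀ : ℝ) (hα₀pos : 0 < α₀) (hβpos : 0 < β)
    (hδ₀nonneg : 0 ≤ δ₀) (hδ₀small : δ₀ ≤ 1 / (4 * α₀ * β ^ 2))
    (habp : (0:ℝ) < 2 * α₀ * β) :
    ∀ ε₀ : ℝ, (1 - Real.sqrt (1 - 4 * α₀ * β ^ 2 * δ₀)) / (2 * α₀ * β) ≤ ε₀ →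
      ε₀ ≤ 1 / (2 * α₀ * β) → 0 ≤ ε₀ ∧ β * (δ₀ + α₀ * ε₀ ^ 2) ≤ ε₀ := by
  intro ε₀ h1 h2
  have harg : 0 ≤ 1 - 4 * α₀ * β ^ 2 * δ₀ := by
    have h4 : (0:ℝ) < 4 * α₀ * β ^ 2 := by positivity
    have := mul_le_mul_of_nonneg_right hδ₀small (le_of_lt h4)
    rw [one_div, inv_mul_cancel₀ (ne_of_gt h4)] at this
    nlinarith
  set s := Real.sqrt (1 - 4 * α₀ * β ^ 2 * δ₀) with hs
  have hs0 : 0 ≤ s := Real.sqrt_nonneg _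
  have hs2 : s ^ 2 = 1 - 4 * α₀ * β ^ 2 * δ₀ := Real.sq_sqrt harg
  have hs1 : s ≤ 1 := by
    have harg1 : 1 - 4 * α₀ * β ^ 2 * δ₀ ≤ 1 := by
      nlinarith [mul_nonneg (mul_nonneg hα₀pos.le (sq_nonneg β)) hδ₀nonneg]
    calc s ≤ Real.sqrt 1 := Real.sqrt_le_sqrt harg1
      _ = 1 := Real.sqrt_one
  rw [div_le_iff₀ habp] at h1
  rw [le_div_iff₀ habp] at h2
  have hε₀ : 0 ≤ ε₀ := by
    have h3 : 0 ≤ 2 * α₀ * β * ε₀ := by nlinarith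
    exact nonneg_of_mul_nonneg_right h3 habp
  refine ⟨hε₀, ?_⟩
  have key : 0 ≤ 4 * α₀ * β * (ε₀ - β * (δ₀ + α₀ * ε₀ ^ 2)) := by
    nlinarith [mul_nonneg (by linarith : (0:ℝ) ≤ s - (1 - ε₀ * (2 * α₀ * β)))
      (by linarith : (0:ℝ) ≤ s + (1 - ε₀ * (2 * α₀ * β)))]
  have h5 : (0:ℝ) < 4 * α₀ * β := by positivity
  nlinarith

set_option maxHeartbeats 1000000 in
set_option synthInstance.maxHeartbeats 400000 in
/-- Fixed point scheme for the linearized reduced Whitham equation: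
if the defect `δ₀ = ‖F₀‖_{L^∞}` satisfies `δ₀ ≤ 1/(4α₀β²)` where `β = 1/(1−c)` and
`‖T₀‖ ≤ c < 1`, then `I − T₀` is invertible with `‖(I−T₀)⁻¹‖ ≤ β`, the map
`G₀(v) = (I−T₀)⁻¹(F₀ − (|x|/(2u₀))v²)` maps the ball `X_{ε₀}` of even `L^∞` functions
into itself with Lipschitz constant `2α₀βε₀`, and for `ε₀ < 1/(2α₀β)` there is a unique
fixed point `v₀ ∈ X_{ε₀}` solving `(I−T₀)v₀ = F₀ − (|x|/(2u₀))v₀²`. -/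
theorem linearized_whitham_fixed_point
    (u₀ : ℝ → ℝ) (hu₀even : ∀ x : ℝ, u₀ (-x) = u₀ x)
    (hu₀per : Function.Periodic u₀ (2 * Real.pi)) (hu₀cont : Continuous u₀)
    (hu₀pos : ∀ x : ℝ, 0 < |x| → |x| ≤ Real.pi → 0 < u₀ x)
    (α₀ : ℝ) (hα₀pos : 0 < α₀)
    (hα₀ : IsLUB {r : ℝ | ∃ x : ℝ, 0 < |x| ∧ |x| ≤ Real.pi ∧ r = |x / (2 * u₀ x)|} α₀)
    (hF₀ : MemLp (F0fun u₀) ⊤ circMeasure)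
    (δ₀ : ℝ) (hδ₀ : δ₀ = (eLpNorm (F0fun u₀) ⊤ circMeasure).toReal)
    (T₀ : Lp ℝ ⊤ circMeasure →L[ℝ] Lp ℝ ⊤ circMeasure)
    (hT₀ : ∀ v : Lp ℝ ⊤ circMeasure,
      ∀ᵐ x ∂circMeasure, (T₀ v : ℝ → ℝ) x = T0fun u₀ (v : ℝ → ℝ) x)
    (c : ℝ) (hc1 : c < 1) (hT₀norm : ‖T₀‖ ≤ c)
    (β : ℝ) (hβ : β = 1 / (1 - c))
    (hδ₀small : δ₀ ≤ 1 / (4 * α₀ * β ^ 2)) :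
    -- (i) invertibility of `I − T₀` with inverse of norm at most `β`
    (∃ S : Lp ℝ ⊤ circMeasure →L[ℝ] Lp ℝ ⊤ circMeasure,
        S.comp (ContinuousLinearMap.id ℝ (Lp ℝ ⊤ circMeasure) - T₀)
            = ContinuousLinearMap.id ℝ (Lp ℝ ⊤ circMeasure) ∧
        (ContinuousLinearMap.id ℝ (Lp ℝ ⊤ circMeasure) - T₀).comp S
            = ContinuousLinearMap.id ℝ (Lp ℝ ⊤ circMeasure) ∧
        ‖S‖ ≤ β) ∧
    ∀ ε₀ : ℝ, (1 - Real.sqrt (1 - 4 * α₀ * β ^ 2 * δ₀)) / (2 * α₀ * β) ≤ ε₀ →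
      ε₀ ≤ 1 / (2 * α₀ * β) →
      -- (ii) `G₀` maps `X_{ε₀}` into itself and is `2α₀βε₀`-Lipschitz there
      ((∃ G₀ : Lp ℝ ⊤ circMeasure → Lp ℝ ⊤ circMeasure,
          (∀ v ∈ Xball ε₀, G₀ v ∈ Xball ε₀ ∧
            ∀ᵐ x ∂circMeasure,
              (G₀ v : ℝ → ℝ) x - (T₀ (G₀ v) : ℝ → ℝ) x
                = F0fun u₀ x - |x| / (2 * u₀ x) * ((v : ℝ → ℝ) x) ^ 2) ∧
          ∀ v ∈ Xball ε₀, ∀ w ∈ Xball ε₀,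
            ‖G₀ v - G₀ w‖ ≤ 2 * α₀ * β * ε₀ * ‖v - w‖) ∧
      -- (iii) existence and uniqueness of the fixed point
      (ε₀ < 1 / (2 * α₀ * β) →
        ∃! v₀ : Lp ℝ ⊤ circMeasure, v₀ ∈ Xball ε₀ ∧
          ∀ᵐ x ∂circMeasure,
            (v₀ : ℝ → ℝ) x - (T₀ v₀ : ℝ → ℝ) x
              = F0fun u₀ x - |x| / (2 * u₀ x) * ((v₀ : ℝ → ℝ) x) ^ 2)) := by
  classical
  have hc0 : 0 ≤ c := le_trans (norm_nonneg T₀) hT₀norm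
  have hβpos : 0 < β := by rw [hβ]; apply div_pos one_pos; linarith
  have hβ1 : 1 ≤ β := by
    rw [hβ, le_div_iff₀ (by linarith)]; linarith
  have hδ₀nonneg : 0 ≤ δ₀ := hδ₀ ▸ ENNReal.toReal_nonneg
  have hT₀lt : ‖T₀‖ < 1 := lt_of_le_of_lt hT₀norm hc1
  -- Neumann series inverse
  obtain ⟨S, hSid1, hSid2, hSnorm⟩ :
      ∃ S : Lp ℝ ⊤ circMeasure →L[ℝ] Lp ℝ ⊤ circMeasure,
        S * ((1 : Lp ℝ ⊤ circMeasure →L[ℝ] Lp ℝ ⊤ circMeasure) - T₀) = 1 ∧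
        ((1 : Lp ℝ ⊤ circMeasure →L[ℝ] Lp ℝ ⊤ circMeasure) - T₀) * S = 1 ∧ ‖S‖ ≤ β := by
    let U : (Lp ℝ ⊤ circMeasure →L[ℝ] Lp ℝ ⊤ circMeasure)ˣ := Units.oneSub T₀ hT₀lt
    have hUval : (U : Lp ℝ ⊤ circMeasure →L[ℝ] Lp ℝ ⊤ circMeasure) = 1 - T₀ := rfl
    refine ⟨↑U⁻¹, by rw [← hUval]; exact U.inv_mul, by rw [← hUval]; exact U.mul_inv, ?_⟩
    have hSval : (↑U⁻¹ : Lp ℝ ⊤ circMeasure →L[ℝ] Lp ℝ ⊤ circMeasure)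
        = ∑' n : ℕ, T₀ ^ n := rfl
    have hpow : ∀ n : ℕ, ‖T₀ ^ n‖ ≤ ‖T₀‖ ^ n := by
      intro n
      cases n with
      | zero =>
          rw [pow_zero, pow_zero, ContinuousLinearMap.one_def]
          exact ContinuousLinearMap.norm_id_le
      | succ k => exact norm_pow_le' _ (Nat.succ_pos k)
    have hsum : Summable (fun n : ℕ => ‖T₀‖ ^ n) :=
      summable_geometric_of_lt_one (norm_nonneg _) hT₀lt
    have hsum2 : Summable (fun n : ℕ => ‖T₀ ^ n‖) :=
      Summable.of_nonneg_of_le (fun n => norm_nonneg _) hpow hsum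
    calc ‖(↑U⁻¹ : Lp ℝ ⊤ circMeasure →L[ℝ] Lp ℝ ⊤ circMeasure)‖
        ≤ ∑' n : ℕ, ‖T₀ ^ n‖ := hSval ▸ norm_tsum_le_tsum_norm hsum2
      _ ≤ ∑' n : ℕ, ‖T₀‖ ^ n := Summable.tsum_le_tsum hpow hsum2 hsum
      _ = (1 - ‖T₀‖)⁻¹ := tsum_geometric_of_lt_one (norm_nonneg _) hT₀lt
      _ ≤ (1 - c)⁻¹ := inv_anti₀ (by linarith) (by linarith)
      _ = β := by rw [hβ, one_div]
  have hinvapp : ∀ w : Lp ℝ ⊤ circMeasure, S w - T₀ (S w) = w := by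
    intro w
    have h := ContinuousLinearMap.ext_iff.mp hSid2 w
    simp only [ContinuousLinearMap.mul_apply, ContinuousLinearMap.sub_apply,
      ContinuousLinearMap.one_apply] at h
    exact h
  have hSapp : ∀ w : Lp ℝ ⊤ circMeasure, S (w - T₀ w) = w := by
    intro w
    have h := ContinuousLinearMap.ext_iff.mp hSid1 w
    simp only [ContinuousLinearMap.mul_apply, ContinuousLinearMap.sub_apply,
      ContinuousLinearMap.one_apply] at h
    exact h
  -- the multiplier and the nonlinear term
  set m : ℝ → ℝ := fun x => |x| / (2 * u₀ x) with hm
  have hm_even : ∀ x, m (-x) = m x := by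
    intro x; simp only [hm, abs_neg, hu₀even]
  have hm_ae : ∀ᵐ x ∂circMeasure, |m x| ≤ α₀ := by
    have h0 : ∀ᵐ x ∂circMeasure, x ∈ Set.Ioc (-Real.pi) Real.pi := by
      rw [circMeasure]; exact ae_restrict_mem measurableSet_Ioc
    have hne : ∀ᵐ x ∂circMeasure, x ≠ 0 := by
      rw [circMeasure, ae_iff]
      have : {a : ℝ | ¬ a ≠ 0} = {(0 : ℝ)} := by ext a; simp
      rw [this, Measure.restrict_apply' measurableSet_Ioc]
      exact measure_mono_null Set.inter_subset_left Real.volume_singleton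
    filter_upwards [h0, hne] with x hx hx0
    have hx1 : 0 < |x| := abs_pos.mpr hx0
    have hx2 : |x| ≤ Real.pi := abs_le.mpr ⟨le_of_lt hx.1, hx.2⟩
    have hub := hα₀.1 ⟨x, hx1, hx2, rfl⟩
    calc |m x| = |x / (2 * u₀ x)| := by
          rw [hm]; rw [abs_div, abs_abs, ← abs_div]
      _ ≤ α₀ := hub
  have hmmeas : AEStronglyMeasurable m circMeasure := by
    apply Measurable.aestronglyMeasurable
    exact (measurable_norm.comp measurable_id).div ((continuous_const.mul hu₀cont).measurable)
  have hbound : ∀ v : Lp ℝ ⊤ circMeasure,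
      ∀ᵐ x ∂circMeasure, ‖m x * ((v : ℝ → ℝ) x) ^ 2‖ ≤ α₀ * ‖v‖ ^ 2 := by
    intro v
    filter_upwards [hm_ae, linf_ae_le v] with x h1 h2
    rw [Real.norm_eq_abs, abs_mul, abs_pow]
    rw [Real.norm_eq_abs] at h2
    exact mul_le_mul h1 (pow_le_pow_left₀ (abs_nonneg _) h2 2) (by positivity)
      (le_of_lt hα₀pos)
  have memM : ∀ v : Lp ℝ ⊤ circMeasure,
      MemLp (fun x => m x * ((v : ℝ → ℝ) x) ^ 2) ⊤ circMeasure := by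
    intro v
    refine memLp_top_of_bound ?_ (α₀ * ‖v‖ ^ 2) (hbound v)
    have hv2 : AEStronglyMeasurable (fun x => ((v : ℝ → ℝ) x) ^ 2) circMeasure := by
      simpa [pow_two, Pi.mul_def] using (Lp.aestronglyMeasurable v).mul (Lp.aestronglyMeasurable v)
    exact hmmeas.mul hv2
  set F₀Lp : Lp ℝ ⊤ circMeasure := hF₀.toLp _ with hF₀Lp
  have hF₀norm : ‖F₀Lp‖ = δ₀ := by rw [hF₀Lp, Lp.norm_toLp, hδ₀]
  set N : Lp ℝ ⊤ circMeasure → Lp ℝ ⊤ circMeasure := fun v => (memM v).toLp _ with hN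
  have hNnorm : ∀ v, ‖N v‖ ≤ α₀ * ‖v‖ ^ 2 := by
    intro v
    rw [hN, Lp.norm_toLp, eLpNorm_exponent_top]
    exact ENNReal.toReal_le_of_le_ofReal (by positivity)
      (eLpNormEssSup_le_of_ae_bound (hbound v))
  have hNdiff : ∀ v w : Lp ℝ ⊤ circMeasure,
      ‖N v - N w‖ ≤ α₀ * (‖v‖ + ‖w‖) * ‖v - w‖ := by
    intro v w
    apply linf_norm_le _ (by positivity)
    filter_upwards [Lp.coeFn_sub (N v) (N w), (memM v).coeFn_toLp, (memM w).coeFn_toLp,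
      linf_ae_le v, linf_ae_le w, linf_ae_abs_sub_le v w, hm_ae] with x h1 h2 h3 h4 h5 h6 h7
    rw [h1, Pi.sub_apply, h2, h3]
    rw [Real.norm_eq_abs] at h4 h5 ⊢
    calc |m x * ((v : ℝ → ℝ) x) ^ 2 - m x * ((w : ℝ → ℝ) x) ^ 2|
        = |m x| * (|(v : ℝ → ℝ) x + (w : ℝ → ℝ) x| * |(v : ℝ → ℝ) x - (w : ℝ → ℝ) x|) := by
          rw [← abs_mul, ← abs_mul]; congr 1; ring
      _ ≤ α₀ * ((‖v‖ + ‖w‖) * ‖v - w‖) := by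
          apply mul_le_mul h7 ?_ (by positivity) (le_of_lt hα₀pos)
          apply mul_le_mul ?_ h6 (abs_nonneg _) (by positivity)
          exact (abs_add_le _ _).trans (add_le_add h4 h5)
      _ = α₀ * (‖v‖ + ‖w‖) * ‖v - w‖ := by ring
  -- evenness facts
  have hT₀even : ∀ u : Lp ℝ ⊤ circMeasure,
      ∀ᵐ x ∂circMeasure, (T₀ u : ℝ → ℝ) (-x) = (T₀ u : ℝ → ℝ) x := by
    intro u
    filter_upwards [hT₀ u, circ_ae_neg (hT₀ u)] with x h1 h2
    rw [h2, h1, T0fun_even u₀ _ hu₀even]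
  have hFeven : ∀ᵐ x ∂circMeasure, (F₀Lp : ℝ → ℝ) (-x) = (F₀Lp : ℝ → ℝ) x := by
    filter_upwards [hF₀.coeFn_toLp, circ_ae_neg hF₀.coeFn_toLp] with x h1 h2
    rw [h2, h1, F0fun_even u₀ hu₀even]
  have hNeven : ∀ v : Lp ℝ ⊤ circMeasure,
      (∀ᵐ x ∂circMeasure, (v : ℝ → ℝ) (-x) = (v : ℝ → ℝ) x) →
      ∀ᵐ x ∂circMeasure, (N v : ℝ → ℝ) (-x) = (N v : ℝ → ℝ) x := by
    intro v hv
    filter_upwards [(memM v).coeFn_toLp, circ_ae_neg (memM v).coeFn_toLp, hv] with x h1 h2 h3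
    rw [h2, h1, hm_even, h3]
  have hSeven : ∀ w : Lp ℝ ⊤ circMeasure,
      (∀ᵐ x ∂circMeasure, (w : ℝ → ℝ) (-x) = (w : ℝ → ℝ) x) →
      ∀ᵐ x ∂circMeasure, (S w : ℝ → ℝ) (-x) = (S w : ℝ → ℝ) x := by
    intro w hw
    have hS2 : S w = w + T₀ (S w) := by
      exact eq_add_of_sub_eq (hinvapp w)
    filter_upwards [Lp.coeFn_add w (T₀ (S w)), circ_ae_neg (Lp.coeFn_add w (T₀ (S w))),
      hw, hT₀even (S w)] with x h1 h2 h3 h4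
    rw [hS2, h2, h1, Pi.add_apply, Pi.add_apply, h3, h4]
  -- the quadratic inequality
  have habp : (0:ℝ) < 2 * α₀ * β := by positivity
  have quad : ∀ ε₀ : ℝ, (1 - Real.sqrt (1 - 4 * α₀ * β ^ 2 * δ₀)) / (2 * α₀ * β) ≤ ε₀ →
      ε₀ ≤ 1 / (2 * α₀ * β) → 0 ≤ ε₀ ∧ β * (δ₀ + α₀ * ε₀ ^ 2) ≤ ε₀ :=
    whitham_quadratic_aux α₀ β δ₀ hα₀pos hβpos hδ₀nonneg hδ₀small habp
  -- the map G₀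
  set G₀ : Lp ℝ ⊤ circMeasure → Lp ℝ ⊤ circMeasure := fun v => S (F₀Lp - N v) with hG₀
  have hGkey : ∀ v : Lp ℝ ⊤ circMeasure, G₀ v - T₀ (G₀ v) = F₀Lp - N v := by
    intro v; rw [hG₀]; exact hinvapp _
  have hGeq : ∀ v : Lp ℝ ⊤ circMeasure,
      ∀ᵐ x ∂circMeasure, (G₀ v : ℝ → ℝ) x - (T₀ (G₀ v) : ℝ → ℝ) x
        = F0fun u₀ x - |x| / (2 * u₀ x) * ((v : ℝ → ℝ) x) ^ 2 := by
    intro v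
    filter_upwards [Lp.coeFn_sub (G₀ v) (T₀ (G₀ v)), Lp.coeFn_sub F₀Lp (N v),
      hF₀.coeFn_toLp, (memM v).coeFn_toLp] with x h1 h2 h3 h4
    rw [hGkey v] at h1
    calc (G₀ v : ℝ → ℝ) x - (T₀ (G₀ v) : ℝ → ℝ) x
        = ((F₀Lp - N v : Lp ℝ ⊤ circMeasure) : ℝ → ℝ) x := by
          rw [h1, Pi.sub_apply]
      _ = (F₀Lp : ℝ → ℝ) x - (N v : ℝ → ℝ) x := by rw [h2, Pi.sub_apply]
      _ = F0fun u₀ x - |x| / (2 * u₀ x) * ((v : ℝ → ℝ) x) ^ 2 := by rw [h3, h4]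
  have hGmem : ∀ ε₀ : ℝ, 0 ≤ ε₀ → β * (δ₀ + α₀ * ε₀ ^ 2) ≤ ε₀ →
      ∀ v ∈ Xball ε₀, G₀ v ∈ Xball ε₀ := by
    intro ε₀ hε₀ hq v hv
    constructor
    · have h1 : ‖F₀Lp - N v‖ ≤ δ₀ + α₀ * ε₀ ^ 2 := by
        refine (norm_sub_le _ _).trans (add_le_add (le_of_eq hF₀norm) ((hNnorm v).trans ?_))
        have h2 := pow_le_pow_left₀ (norm_nonneg v) hv.1 2
        exact mul_le_mul_of_nonneg_left h2 hα₀pos.le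
      calc ‖G₀ v‖ ≤ ‖S‖ * ‖F₀Lp - N v‖ := ContinuousLinearMap.le_opNorm _ _
        _ ≤ β * (δ₀ + α₀ * ε₀ ^ 2) := by
            apply mul_le_mul hSnorm h1 (norm_nonneg _) (le_of_lt hβpos)
        _ ≤ ε₀ := hq
    · apply hSeven
      filter_upwards [Lp.coeFn_sub F₀Lp (N v), circ_ae_neg (Lp.coeFn_sub F₀Lp (N v)),
        hFeven, hNeven v hv.2] with x h1 h2 h3 h4
      rw [h2, h1, Pi.sub_apply, Pi.sub_apply, h3, h4]
  have hGlip : ∀ ε₀ : ℝ, 0 ≤ ε₀ → ∀ v ∈ Xball ε₀, ∀ w ∈ Xball ε₀,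
      ‖G₀ v - G₀ w‖ ≤ 2 * α₀ * β * ε₀ * ‖v - w‖ := by
    intro ε₀ hε₀ v hv w hw
    have h1 : G₀ v - G₀ w = S (N w - N v) := by
      rw [hG₀]; rw [← map_sub]; congr 1; abel
    have h2 : ‖N w - N v‖ ≤ 2 * α₀ * ε₀ * ‖v - w‖ := by
      refine (hNdiff w v).trans ?_
      rw [norm_sub_rev]
      have h3 : ‖w‖ + ‖v‖ ≤ 2 * ε₀ := by have := hv.1; have := hw.1; linarith
      calc α₀ * (‖w‖ + ‖v‖) * ‖v - w‖
          ≤ α₀ * (2 * ε₀) * ‖v - w‖ := by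
            apply mul_le_mul_of_nonneg_right _ (norm_nonneg _)
            exact mul_le_mul_of_nonneg_left h3 hα₀pos.le
        _ = 2 * α₀ * ε₀ * ‖v - w‖ := by ring
    calc ‖G₀ v - G₀ w‖ = ‖S (N w - N v)‖ := by rw [h1]
      _ ≤ ‖S‖ * ‖N w - N v‖ := ContinuousLinearMap.le_opNorm _ _
      _ ≤ β * (2 * α₀ * ε₀ * ‖v - w‖) := by
          apply mul_le_mul hSnorm h2 (norm_nonneg _) (le_of_lt hβpos)
      _ = 2 * α₀ * β * ε₀ * ‖v - w‖ := by ring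
  refine ⟨⟨S, ?_, ?_, hSnorm⟩, ?_⟩
  · rw [← ContinuousLinearMap.mul_def, ← ContinuousLinearMap.one_def]; exact hSid1
  · rw [← ContinuousLinearMap.mul_def, ← ContinuousLinearMap.one_def]; exact hSid2
  intro ε₀ hε₁ hε₂
  obtain ⟨hε₀, hq⟩ := quad ε₀ hε₁ hε₂
  refine ⟨⟨G₀, fun v hv => ⟨hGmem ε₀ hε₀ hq v hv, hGeq v⟩,
    fun v hv w hw => hGlip ε₀ hε₀ v hv w hw⟩, ?_⟩
  -- part (iii)
  intro hε₃
  have hk1 : 2 * α₀ * β * ε₀ < 1 := by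
    rw [lt_div_iff₀ habp] at hε₃
    calc 2 * α₀ * β * ε₀ = ε₀ * (2 * α₀ * β) := by ring
      _ < 1 := hε₃
  have hknn : 0 ≤ 2 * α₀ * β * ε₀ := by positivity
  -- Xball is closed
  have hclosed : IsClosed (Xball ε₀) := by
    apply IsSeqClosed.isClosed
    intro f v hf hfv
    constructor
    · exact le_of_tendsto hfv.norm (Filter.Eventually.of_forall fun n => (hf n).1)
    · have hd : Filter.Tendsto (fun n => ‖f n - v‖) Filter.atTop (nhds 0) := by
        rw [← tendsto_iff_norm_sub_tendsto_zero]; exact hfv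
      have H : ∀ᵐ x ∂circMeasure, ∀ n : ℕ,
          |(f n : ℝ → ℝ) x - (v : ℝ → ℝ) x| ≤ ‖f n - v‖ ∧
          |(f n : ℝ → ℝ) (-x) - (v : ℝ → ℝ) (-x)| ≤ ‖f n - v‖ ∧
          (f n : ℝ → ℝ) (-x) = (f n : ℝ → ℝ) x := by
        rw [MeasureTheory.ae_all_iff]
        intro n
        exact (linf_ae_abs_sub_le (f n) v).and
          ((circ_ae_neg (linf_ae_abs_sub_le (f n) v)).and (hf n).2)
      filter_upwards [H] with x hx
      have hb : ∀ n : ℕ, |(v : ℝ → ℝ) (-x) - (v : ℝ → ℝ) x| ≤ 2 * ‖f n - v‖ := by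
        intro n
        obtain ⟨a, b, cc⟩ := hx n
        calc |(v : ℝ → ℝ) (-x) - (v : ℝ → ℝ) x|
            ≤ |(v : ℝ → ℝ) (-x) - (f n : ℝ → ℝ) (-x)| +
              |(f n : ℝ → ℝ) (-x) - (v : ℝ → ℝ) x| := abs_sub_le _ _ _
          _ ≤ 2 * ‖f n - v‖ := by
              have b' : |(v : ℝ → ℝ) (-x) - (f n : ℝ → ℝ) (-x)| ≤ ‖f n - v‖ := by
                rw [abs_sub_comm]; exact b
              have a' : |(f n : ℝ → ℝ) (-x) - (v : ℝ → ℝ) x| ≤ ‖f n - v‖ := by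
                rw [cc]; exact a
              linarith
      have hlim : Filter.Tendsto (fun n => 2 * ‖f n - v‖) Filter.atTop (nhds 0) := by
        simpa using hd.const_mul 2
      have h0 : |(v : ℝ → ℝ) (-x) - (v : ℝ → ℝ) x| ≤ 0 :=
        ge_of_tendsto hlim (Filter.Eventually.of_forall hb)
      have := abs_nonpos_iff.mp h0
      exact sub_eq_zero.mp this
  haveI : CompleteSpace (Xball ε₀) := hclosed.completeSpace_coe
  haveI hne : Nonempty (Xball ε₀) := by
    refine ⟨⟨0, ?_, ?_⟩⟩
    · simpa using hε₀
    · filter_upwards [Lp.coeFn_zero ℝ ⊤ circMeasure,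
        circ_ae_neg (Lp.coeFn_zero ℝ ⊤ circMeasure)] with x h1 h2
      rw [h1, h2]; simp
  set K : NNReal := ⟨2 * α₀ * β * ε₀, hknn⟩ with hK
  set φ : Xball ε₀ → Xball ε₀ := fun v => ⟨G₀ v, hGmem ε₀ hε₀ hq v v.2⟩ with hφ
  have hlip : LipschitzWith K φ := by
    apply LipschitzWith.of_dist_le_mul
    intro a b
    rw [Subtype.dist_eq, Subtype.dist_eq, dist_eq_norm, dist_eq_norm]
    exact hGlip ε₀ hε₀ a a.2 b b.2
  have hcontr : ContractingWith K φ := by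
    refine ⟨?_, hlip⟩
    rw [← NNReal.coe_lt_coe]
    exact_mod_cast hk1
  set vfix := ContractingWith.fixedPoint φ hcontr with hvfix
  have hfixpt : φ vfix = vfix := hcontr.fixedPoint_isFixedPt
  have hfixG : G₀ ↑vfix = ↑vfix := congrArg Subtype.val hfixpt
  refine ⟨↑vfix, ⟨vfix.2, ?_⟩, ?_⟩
  · have := hGeq ↑vfix
    rw [hfixG] at this
    exact this
  · rintro w ⟨hwmem, hweq⟩
    have hw1 : w - T₀ w = F₀Lp - N w := by
      apply Lp.ext
      filter_upwards [Lp.coeFn_sub w (T₀ w), Lp.coeFn_sub F₀Lp (N w),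
        hF₀.coeFn_toLp, (memM w).coeFn_toLp, hweq] with x a b cc d e
      rw [a, Pi.sub_apply, b, Pi.sub_apply, cc, d]
      exact e
    have hGw : G₀ w = w := by
      rw [hG₀]
      show S (F₀Lp - N w) = w
      rw [← hw1]
      exact hSapp w
    have hφw : φ ⟨w, hwmem⟩ = ⟨w, hwmem⟩ := Subtype.ext hGw
    have := hcontr.fixedPoint_unique hφw
    exact congrArg Subtype.val this
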